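/- Let x : ℕ → ℕ. Define y : ℕ → ℚ by y t = 1/(2·(x t) + 1) if the cardinality of {s | s < t ∧ x s = x t} is even, and y t = 1/(2·(x t) + 2) if it is odd. Then x tends to infinity (Filter.Tendsto x Filter.atTop Filter.atTop) if and only if y is a Cauchy sequence of rationals. -/

import Mathlib

/-- divergence of `x` is equivalent to Cauchyness of the derived
rational sequence `y`. -/
theorem stmt_11 (x : ℕ → ℕ) (y : ℕ → ℚ)
    (hy : ∀ t, y t =
      if Even (((Finset.range t).filter fun s => x s = x t).card)
      then 1 / (2 * (x t : ℚ) + 1)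
      else 1 / (2 * (x t : ℚ) + 2)) :
    Filter.Tendsto x Filter.atTop Filter.atTop ↔ IsCauSeq (abs : ℚ → ℚ) y := by
  have hybound : ∀ M t, M ≤ x t → 0 < y t ∧ y t ≤ 1 / ((M : ℚ) + 1) := by
    intro M t hM
    have hM' : (M : ℚ) ≤ (x t : ℚ) := by exact_mod_cast hM
    have h0 : (0:ℚ) < (M:ℚ) + 1 := by positivity
    rw [hy t]
    split_ifs with h
    · exact ⟨by positivity, by apply one_div_le_one_div_of_le h0; linarith⟩
    · exact ⟨by positivity, by apply one_div_le_one_div_of_le h0; linarith⟩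
  constructor
  · intro hx ε hε
    set M := ⌈1/ε⌉₊ with hMdef
    obtain ⟨N, hN⟩ := Filter.eventually_atTop.1 (Filter.tendsto_atTop.1 hx M)
    have hsmall : ∀ t, N ≤ t → 0 < y t ∧ y t < ε := by
      intro t ht
      obtain ⟨h1, h2⟩ := hybound M t (hN t ht)
      refine ⟨h1, lt_of_le_of_lt h2 ?_⟩
      rw [div_lt_iff₀ (by positivity)]
      have h3 : 1/ε ≤ (M:ℚ) := Nat.le_ceil _
      calc (1:ℚ) = ε * (1/ε) := by field_simp
        _ < ε * ((M:ℚ)+1) := by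
            apply mul_lt_mul_of_pos_left _ hε; linarith
    refine ⟨N, fun j hj => ?_⟩
    obtain ⟨ha, hb⟩ := hsmall j hj
    obtain ⟨hc, hd⟩ := hsmall N le_rfl
    rw [abs_sub_lt_iff]
    constructor <;> linarith
  · intro hc
    have hfin : ∀ n, {t | x t = n}.Finite := by
      intro n
      rw [← Set.not_infinite]
      intro hinf
      obtain ⟨D, hD⟩ : ∃ D : ℚ, D = 1/(2*(n:ℚ)+1) - 1/(2*(n:ℚ)+2) := ⟨_, rfl⟩
      have hd1 : (0:ℚ) < 2*(n:ℚ)+1 := by positivity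
      have hd2 : (0:ℚ) < 2*(n:ℚ)+2 := by positivity
      have hDpos : 0 < D := by
        rw [hD, sub_pos]
        apply one_div_lt_one_div_of_lt hd1; linarith
      obtain ⟨N, hN⟩ := hc (D/2) (by positivity)
      obtain ⟨t, ht, htN⟩ := hinf.exists_gt N
      have hxt : x t = n := ht
      have hex : ∃ s, t < s ∧ x s = n := by
        obtain ⟨s, hs1, hs2⟩ := hinf.exists_gt t
        exact ⟨s, hs2, hs1⟩
      obtain ⟨htt', hxt'⟩ := Nat.find_spec hex
      set t' := Nat.find hex with ht'def
      have hmin : ∀ s, t < s → s < t' → x s ≠ n := fun s h1 h2 h3 =>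
        Nat.find_min hex h2 ⟨h1, h3⟩
      have hcard : ((Finset.range t').filter fun s => x s = x t').card
          = ((Finset.range t).filter fun s => x s = x t).card + 1 := by
        have hset : ((Finset.range t').filter fun s => x s = x t')
            = insert t ((Finset.range t).filter fun s => x s = x t) := by
          ext s
          simp only [Finset.mem_filter, Finset.mem_range, Finset.mem_insert, hxt, hxt']
          constructor
          · rintro ⟨hs, hsn⟩
            rcases lt_trichotomy s t with h|h|h
            · exact Or.inr ⟨h, hsn⟩
            · exact Or.inl h
            · exact absurd hsn (hmin s h hs)
          · rintro (rfl | ⟨hs, hsn⟩)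
            · exact ⟨htt', hxt⟩
            · exact ⟨hs.trans htt', hsn⟩
        rw [hset, Finset.card_insert_of_notMem]
        simp
      have h1 := hy t
      have h2 := hy t'
      simp only [hxt] at h1 hcard
      simp only [hxt'] at h2 hcard
      rw [hcard] at h2
      have hyv : (y t = 1/(2*(n:ℚ)+1) ∧ y t' = 1/(2*(n:ℚ)+2)) ∨
                 (y t = 1/(2*(n:ℚ)+2) ∧ y t' = 1/(2*(n:ℚ)+1)) := by
        rcases Nat.even_or_odd (((Finset.range t).filter fun s => x s = n).card) with he | ho
        · rw [if_pos he] at h1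
          rw [if_neg (by simp [Nat.even_add_one, he])] at h2
          exact Or.inl ⟨h1, h2⟩
        · rw [if_neg (Nat.not_even_iff_odd.2 ho)] at h1
          rw [if_pos (by simp [Nat.even_add_one, Nat.not_even_iff_odd.2 ho])] at h2
          exact Or.inr ⟨h1, h2⟩
      have hlt : (1:ℚ)/(2*(n:ℚ)+2) < 1/(2*(n:ℚ)+1) :=
        one_div_lt_one_div_of_lt hd1 (by linarith)
      have habs : |y t - y t'| = D := by
        rcases hyv with ⟨ha, hb⟩ | ⟨ha, hb⟩
        · rw [ha, hb, ← hD, abs_of_pos hDpos]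
        · rw [ha, hb, abs_of_neg (by linarith : (1:ℚ)/(2*(n:ℚ)+2) - 1/(2*(n:ℚ)+1) < 0), hD]
          ring
      have hA := hN t htN.le
      have hB := hN t' (htN.le.trans htt'.le)
      have htri : |y t - y t'| ≤ |y t - y N| + |y t' - y N| := by
        calc |y t - y t'| = |(y t - y N) + (y N - y t')| := by ring_nf
          _ ≤ |y t - y N| + |y N - y t'| := abs_add_le _ _
          _ = |y t - y N| + |y t' - y N| := by rw [abs_sub_comm (y N)]
      rw [habs] at htri
      linarith
    refine Filter.tendsto_atTop.2 fun b => ?_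
    rw [← Nat.cofinite_eq_atTop, Filter.eventually_cofinite]
    have hsub : {t | ¬ b ≤ x t} ⊆ ⋃ n ∈ Finset.range b, {t | x t = n} := by
      intro t h
      exact Set.mem_biUnion (Finset.mem_range.2 (not_le.1 h)) rfl
    exact (Set.Finite.biUnion (Finset.range b).finite_toSet fun n _ => hfin n).subset hsub
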